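/- Let X, Y be real Banach spaces and T ∈ B(X,Y) with T ≠ 0 and R(T) closed. Assume N(T) ⊆ X and R(T) ⊆ Y are Chebyshev subspaces, so the Moore–Penrose metric generalized inverse T^M exists, and assume T^M is quasi-additive on R(T). Let δT ∈ B(X,Y) satisfy R(δT) ⊆ R(T), N(T) ⊆ N(δT), and ‖T^M δT‖ < 1, and put T̄ = T + δT. Then N(T̄) = N(T), R(T̄) = R(T), T̄ has a Moore–Penrose metric generalized inverse T̄^M = T^M ∘ (I_Y + δT T^M)^{-1} = (I_X + T^M δT)^{-1} ∘ T^M, and ‖T̄^M − T^M‖ ≤ ‖T^M‖ · ‖T^M δT‖/(1 − ‖T^M δT‖). -/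
import Mathlib


open Metric Set

variable {X Y : Type*} [NormedAddCommGroup X] [NormedSpace ℝ X]
  [NormedAddCommGroup Y] [NormedSpace ℝ Y]

/-- `F` is a bounded homogeneous operator: `F (c • x) = c • F x` for all real `c`,
and `F` maps bounded sets to bounded sets (equivalently, `‖F x‖ ≤ M * ‖x‖`). -/
def BddHomOp (F : X → Y) : Prop :=
  (∀ (c : ℝ) (x : X), F (c • x) = c • F x) ∧ ∃ M : ℝ, ∀ x, ‖F x‖ ≤ M * ‖x‖

/-- The norm of a (homogeneous) map: `sup {‖F x‖ : ‖x‖ = 1}`. -/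
noncomputable def hnorm (F : X → Y) : ℝ :=
  sSup ((fun x => ‖F x‖) '' {x : X | ‖x‖ = 1})

/-- `F` is quasi-additive on the subset `M`. -/
def QuasiAdditiveOn (F : X → Y) (M : Set X) : Prop :=
  ∀ x : X, ∀ z ∈ M, F (x + z) = F x + F z

/-- `S` is a bounded homogeneous generalized inverse of `T`: `T S T = T` and `S T S = S`. -/
def GenInv (T : X →L[ℝ] Y) (S : Y → X) : Prop :=
  BddHomOp S ∧ (∀ x, T (S (T x)) = T x) ∧ (∀ y, S (T (S y)) = S y)

/-- A subset `V` is Chebyshev: every point has a unique nearest point in `V`. -/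
def IsChebyshev (V : Set X) : Prop :=
  ∀ x : X, ∃! v, v ∈ V ∧ ‖x - v‖ = Metric.infDist x V

/-- `p` is the metric projector onto `V`: `p x ∈ V` is a nearest point to `x` in `V`. -/
def IsMetricProjOn (V : Set X) (p : X → X) : Prop :=
  ∀ x, p x ∈ V ∧ ‖x - p x‖ = Metric.infDist x V

/-- `TH` is a quasi-linear projector generalized inverse of `T`. -/
def QLPGenInv (T : X →L[ℝ] Y) (TH : Y → X) : Prop :=
  BddHomOp TH ∧ (∀ x, T (TH (T x)) = T x) ∧ (∀ y, TH (T (TH y)) = TH y) ∧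
  (∃ P : X →L[ℝ] X, (∀ x, P (P x) = P x) ∧ Set.range ⇑P = {x : X | T x = 0} ∧
    ∀ x, TH (T x) = x - P x) ∧
  (∃ Q : Y → Y, BddHomOp Q ∧ (∀ y, Q (Q y) = Q y) ∧ QuasiAdditiveOn Q (Set.range Q) ∧
    Set.range Q = Set.range ⇑T ∧ ∀ y, T (TH y) = Q y)

theorem stmt_18 [CompleteSpace X] [CompleteSpace Y] (T δT : X →L[ℝ] Y) (hT : T ≠ 0)
    (hcl : IsClosed (Set.range ⇑T))
    (hN : IsChebyshev {x : X | T x = 0}) (hR : IsChebyshev (Set.range ⇑T))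
    (πN : X → X) (hπN : IsMetricProjOn {x : X | T x = 0} πN)
    (πR : Y → Y) (hπR : IsMetricProjOn (Set.range ⇑T) πR)
    (TM : Y → X) (hTM : BddHomOp TM)
    (hTM1 : ∀ x, T (TM (T x)) = T x) (hTM2 : ∀ y, TM (T (TM y)) = TM y)
    (hTM3 : ∀ y, T (TM y) = πR y) (hTM4 : ∀ x, TM (T x) = x - πN x)
    (hqT : QuasiAdditiveOn TM (Set.range ⇑T))
    (hran : Set.range ⇑δT ⊆ Set.range ⇑T)
    (hker : {x : X | T x = 0} ⊆ {x : X | δT x = 0})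
    (A : X →L[ℝ] X) (hA : ∀ x, A x = TM (δT x)) (hAn : ‖A‖ < 1) :
    {x : X | (T + δT) x = 0} = {x : X | T x = 0} ∧
    Set.range ⇑(T + δT) = Set.range ⇑T ∧
    (∃ Ψ : Y → Y, (∀ y, Ψ y + δT (TM (Ψ y)) = y) ∧ (∀ y, Ψ (y + δT (TM y)) = y) ∧
      ∀ y, TM (Ψ y) = Ring.inverse (1 + A) (TM y)) ∧
    (∀ x, (T + δT) (Ring.inverse (1 + A) (TM ((T + δT) x))) = (T + δT) x) ∧
    (∀ y, Ring.inverse (1 + A) (TM ((T + δT) (Ring.inverse (1 + A) (TM y)))) =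
      Ring.inverse (1 + A) (TM y)) ∧
    (∀ y, (T + δT) (Ring.inverse (1 + A) (TM y)) = πR y) ∧
    (∀ x, Ring.inverse (1 + A) (TM ((T + δT) x)) = x - πN x) ∧
    hnorm (fun y => Ring.inverse (1 + A) (TM y) - TM y) ≤
      hnorm TM * (‖A‖ / (1 - ‖A‖)) := by
  classical
  -- setup: B = inverse of (1+A)
  have hA' : ‖(-A : X →L[ℝ] X)‖ < 1 := by rwa [norm_neg]
  let u : (X →L[ℝ] X)ˣ := Units.oneSub (-A) hA'
  have hu1 : (u : X →L[ℝ] X) = 1 + A := by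
    show 1 - (-A) = 1 + A; rw [sub_neg_eq_add]
  set B : X →L[ℝ] X := ↑u⁻¹ with hBdef
  have hinv : Ring.inverse (1 + A) = B := by
    rw [← hu1, Ring.inverse_unit]
  have hBA : B * (1 + A) = 1 := by rw [← hu1]; exact u.inv_mul
  have hAB : (1 + A) * B = 1 := by rw [← hu1]; exact u.mul_inv
  have hB1 : ∀ x, B ((1 + A) x) = x := by
    intro x
    have := congrArg (fun f : X →L[ℝ] X => f x) hBA
    simpa using this
  have hB2 : ∀ x, (1 + A) (B x) = x := by
    intro x
    have := congrArg (fun f : X →L[ℝ] X => f x) hAB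
    simpa using this
  -- basic TM facts
  have hTM0 : TM 0 = 0 := by
    have := hTM.1 0 0
    simpa using this
  have hTMneg : ∀ z, TM (-z) = -TM z := by
    intro z
    have := hTM.1 (-1) z
    simpa using this
  have hδ : ∀ x, δT x ∈ Set.range ⇑T := fun x => hran ⟨x, rfl⟩
  have hπRfix : ∀ x, πR (T x) = T x := fun x => (hTM3 (T x)).symm.trans (hTM1 x)
  have hπNker : ∀ x, T (πN x) = 0 := fun x => (hπN x).1
  have hπNδ : ∀ x, δT (πN x) = 0 := fun x => hker (hπNker x)
  have hApiN : ∀ x, A (πN x) = 0 := by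
    intro x; rw [hA, hπNδ, hTM0]
  -- key: TM ((T+δT) x) = (1+A) (x - πN x)
  have hkey : ∀ x, TM ((T + δT) x) = (1 + A) (x - πN x) := by
    intro x
    have h1 : TM (T x + δT x) = TM (T x) + TM (δT x) := hqT (T x) (δT x) (hδ x)
    have : (T + δT) x = T x + δT x := rfl
    rw [this, h1, hTM4, ← hA]
    have : (1 + A) (x - πN x) = (x - πN x) + A (x - πN x) := by
      simp [ContinuousLinearMap.add_apply]
    rw [this, map_sub, hApiN, sub_zero]
  -- T ∘ (1+A) = T + δT
  have hTcomp : ∀ x, T ((1 + A) x) = (T + δT) x := by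
    intro x
    have : (1 + A) x = x + A x := by simp [ContinuousLinearMap.add_apply]
    rw [this, map_add, hA, hTM3]
    obtain ⟨z, hz⟩ := hδ x
    rw [← hz, hπRfix, hz]
    rfl
  have hTB : ∀ z, (T + δT) (B z) = T z := by
    intro z
    rw [← hTcomp, hB2]
  -- kernels equal
  have hker_eq : {x : X | (T + δT) x = 0} = {x : X | T x = 0} := by
    ext x
    simp only [Set.mem_setOf_eq]
    constructor
    · intro h
      have h2 : (1 + A) (x - πN x) = 0 := by rw [← hkey, h, hTM0]
      have h3 : x - πN x = 0 := by
        have := hB1 (x - πN x)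
        rw [h2] at this
        simpa using this.symm
      have hx : x = πN x := by rwa [sub_eq_zero] at h3
      rw [hx]; exact hπNker x
    · intro h
      have h2 : δT x = 0 := hker h
      show T x + δT x = 0
      rw [h, h2, add_zero]
  -- ranges equal
  have hran_eq : Set.range ⇑(T + δT) = Set.range ⇑T := by
    apply Set.eq_of_subset_of_subset
    · rintro y ⟨x, rfl⟩
      show T x + δT x ∈ _
      obtain ⟨z, hz⟩ := hδ x
      exact ⟨x + z, by rw [map_add, hz]⟩
    · rintro y ⟨x, rfl⟩
      exact ⟨B x, hTB x⟩
  refine ⟨hker_eq, hran_eq, ?_, ?_, ?_, ?_, ?_, ?_⟩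
  · -- Ψ
    refine ⟨fun y => y - δT (B (TM y)), ?_, ?_, ?_⟩
    · -- first compute TM (Ψ y)
      intro y
      show (y - δT (B (TM y))) + δT (TM (y - δT (B (TM y)))) = y
      have hTMΨ : TM (y - δT (B (TM y))) = B (TM y) := by
        have h1 : y - δT (B (TM y)) = y + (-(δT (B (TM y)))) := sub_eq_add_neg _ _
        have h2 : -(δT (B (TM y))) ∈ Set.range ⇑T := by
          obtain ⟨z, hz⟩ := hδ (B (TM y))
          exact ⟨-z, by rw [map_neg, hz]⟩
        rw [h1, hqT y _ h2, hTMneg, ← hA]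
        have hABc : A (B (TM y)) = TM y - B (TM y) := by
          have h3 : B (TM y) + A (B (TM y)) = TM y := by
            simpa [ContinuousLinearMap.add_apply] using hB2 (TM y)
          rw [eq_sub_iff_add_eq, add_comm]; exact h3
        rw [hABc]; abel
      rw [hTMΨ]
      abel
    · intro y
      show (y + δT (TM y)) - δT (B (TM (y + δT (TM y)))) = y
      have hTMΦ : TM (y + δT (TM y)) = (1 + A) (TM y) := by
        rw [hqT y _ (hδ (TM y)), ← hA]
        simp [ContinuousLinearMap.add_apply]
      rw [hTMΦ, hB1]
      abel
    · intro y
      show TM (y - δT (B (TM y))) = Ring.inverse (1 + A) (TM y)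
      rw [hinv]
      have h1 : y - δT (B (TM y)) = y + (-(δT (B (TM y)))) := sub_eq_add_neg _ _
      have h2 : -(δT (B (TM y))) ∈ Set.range ⇑T := by
        obtain ⟨z, hz⟩ := hδ (B (TM y))
        exact ⟨-z, by rw [map_neg, hz]⟩
      rw [h1, hqT y _ h2, hTMneg, ← hA]
      have h3 : B (TM y) + A (B (TM y)) = TM y := by
        simpa [ContinuousLinearMap.add_apply] using hB2 (TM y)
      have hABc : A (B (TM y)) = TM y - B (TM y) := by
        rw [eq_sub_iff_add_eq, add_comm]; exact h3
      rw [hABc]; abel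
  · intro x
    rw [hinv, hkey, hB1, map_sub]
    have : (T + δT) (πN x) = 0 := by
      show T (πN x) + δT (πN x) = 0
      rw [hπNker, hπNδ, add_zero]
    rw [this, sub_zero]
  · intro y
    rw [hinv, hTB, hTM2]
  · intro y
    rw [hinv, hTB, hTM3]
  · intro x
    rw [hinv, hkey, hB1]
  · -- norm bound
    rw [hinv]
    have hApos : (0:ℝ) < 1 - ‖A‖ := by linarith
    -- ‖B‖ ≤ (1-‖A‖)⁻¹
    have hBsum : B + B * A = 1 := by
      calc B + B * A = B * (1 + A) := by rw [mul_add, mul_one]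
      _ = 1 := hBA
    have hBnorm : ‖B‖ * (1 - ‖A‖) ≤ 1 := by
      have h1 : ‖B‖ ≤ 1 + ‖B * A‖ := by
        calc ‖B‖ = ‖(1 : X →L[ℝ] X) - B * A‖ := by rw [← hBsum]; congr 1; abel
        _ ≤ ‖(1 : X →L[ℝ] X)‖ + ‖B * A‖ := norm_sub_le _ _
        _ ≤ 1 + ‖B * A‖ := by
            have : ‖(1 : X →L[ℝ] X)‖ ≤ 1 := ContinuousLinearMap.norm_id_le
            linarith
      have h2 : ‖B * A‖ ≤ ‖B‖ * ‖A‖ := norm_mul_le _ _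
      nlinarith
    have hBle : ‖B‖ ≤ (1 - ‖A‖)⁻¹ := by
      rw [inv_eq_one_div, le_div_iff₀ hApos]
      linarith [hBnorm]
    have hBm1 : (B - 1 : X →L[ℝ] X) = -(B * A) := by
      rw [← hBsum]; abel
    have hBm1norm : ‖(B - 1 : X →L[ℝ] X)‖ ≤ ‖A‖ / (1 - ‖A‖) := by
      rw [hBm1, norm_neg]
      calc ‖B * A‖ ≤ ‖B‖ * ‖A‖ := norm_mul_le _ _
      _ ≤ (1 - ‖A‖)⁻¹ * ‖A‖ := by
          apply mul_le_mul_of_nonneg_right hBle (norm_nonneg A)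
      _ = ‖A‖ / (1 - ‖A‖) := by rw [div_eq_mul_inv]; ring
    -- nonempty unit sphere in Y
    obtain ⟨x0, hx0⟩ : ∃ x, T x ≠ 0 := by
      by_contra h
      push_neg at h
      exact hT (by ext x; simp [h x])
    set y0 : Y := ‖T x0‖⁻¹ • T x0 with hy0
    have hy0n : ‖y0‖ = 1 := by
      rw [hy0, norm_smul, norm_inv, norm_norm, inv_mul_cancel₀ (norm_ne_zero_iff.2 hx0)]
    obtain ⟨M, hM⟩ := hTM.2
    have hbdd : BddAbove ((fun x => ‖TM x‖) '' {x : Y | ‖x‖ = 1}) := by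
      refine ⟨M, ?_⟩
      rintro r ⟨y, hy, rfl⟩
      have := hM y
      rw [Set.mem_setOf_eq.mp hy] at this
      simpa using this
    have hne : ((fun x => ‖TM x‖) '' {x : Y | ‖x‖ = 1}).Nonempty := ⟨_, ⟨y0, hy0n, rfl⟩⟩
    have hTMle : ∀ y : Y, ‖y‖ = 1 → ‖TM y‖ ≤ hnorm TM := by
      intro y hy
      exact le_csSup hbdd ⟨y, hy, rfl⟩
    have hTMnn : 0 ≤ hnorm TM := le_trans (norm_nonneg _) (hTMle y0 hy0n)
    apply csSup_le
    · exact ⟨_, ⟨y0, hy0n, rfl⟩⟩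
    · rintro r ⟨y, hy, rfl⟩
      have hy1 : ‖y‖ = 1 := hy
      have heq : B (TM y) - TM y = (B - 1 : X →L[ℝ] X) (TM y) := by
        simp [ContinuousLinearMap.sub_apply]
      calc ‖B (TM y) - TM y‖ = ‖(B - 1 : X →L[ℝ] X) (TM y)‖ := by rw [heq]
      _ ≤ ‖(B - 1 : X →L[ℝ] X)‖ * ‖TM y‖ := ContinuousLinearMap.le_opNorm _ _
      _ ≤ (‖A‖ / (1 - ‖A‖)) * hnorm TM := by
          apply mul_le_mul hBm1norm (hTMle y hy1) (norm_nonneg _)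
          positivity
      _ = hnorm TM * (‖A‖ / (1 - ‖A‖)) := mul_comm _ _
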